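/- Let M be a loopless matroid on [n] with lattice of flats L(M) and independence complex I(M). In the poset ~L(M) = L(M) ⊎ I(M) (with I ⋖ cl_M(I)_* for each independent set I, internal orders preserved), take the building set G = { {i} : i ∈ [n] } ∪ { F_* : F ∈ L(M) }. Then a subset of G is nested if and only if it has the form { {i} : i ∈ I } ∪ { F_* : F ∈ 𝓕 } for some independent set I ∈ I(M) and some chain 𝓕 of flats with I ⊆ min(𝓕) (I compatible with 𝓕). -/

import Mathlib

open Finset

/-- the poset `~L(M) = I(M) ⊎ L(M)` -/
abbrev TildeL {α : Type*} (M : Matroid α) :=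
  {I : Set α // M.Indep I} ⊕ {F : Set α // M.IsFlat F}

/-- the order on `~L(M)`: independent sets and flats are each ordered by inclusion,
and an independent set `I` lies below a flat `F_*` iff `I ⊆ F`
(this is the order generated by the covering relations `I ⋖ (cl I)_*`). -/
def tle {α : Type*} {M : Matroid α} : TildeL M → TildeL M → Prop
  | Sum.inl I, Sum.inl J => I.1 ⊆ J.1
  | Sum.inl I, Sum.inr F => I.1 ⊆ F.1
  | Sum.inr _, Sum.inl _ => False
  | Sum.inr F, Sum.inr G => F.1 ⊆ G.1

/-- the building set `G = {{i} : i ∈ E} ∪ {F_* : F ∈ L(M)}` in `~L(M)` -/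
def tBuilding {α : Type*} (M : Matroid α) : Set (TildeL M) :=
  {x | (∃ i : α, ∃ h : M.Indep {i}, x = Sum.inl ⟨{i}, h⟩) ∨
       (∃ F : Set α, ∃ h : M.IsFlat F, x = Sum.inr ⟨F, h⟩)}

/-- `g` is the least upper bound of `s` in the poset `(~L(M), tle)` -/
def IsTLUB {α : Type*} {M : Matroid α} (s : Set (TildeL M)) (g : TildeL M) : Prop :=
  (∀ x ∈ s, tle x g) ∧ ∀ z : TildeL M, (∀ x ∈ s, tle x z) → tle g z

/-- `N ⊆ tBuilding M` is nested: for any pairwise incomparable elements of `N`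
(at least two of them), their join is not in the building set. -/
def TNested {α : Type*} (M : Matroid α) (N : Set (TildeL M)) : Prop :=
  N ⊆ tBuilding M ∧
  ∀ s ⊆ N, s.Finite → 2 ≤ s.ncard →
    (∀ x ∈ s, ∀ y ∈ s, x ≠ y → ¬ tle x y ∧ ¬ tle y x) →
    ∀ g ∈ tBuilding M, ¬ IsTLUB s g

/-- the closure of any set is a flat -/
lemma flat_closure' {α : Type*} (M : Matroid α) (X : Set α) : M.IsFlat (M.closure X) := by
  rw [Matroid.closure_def, Set.sInter_eq_iInter]
  have hne : Nonempty {F // F ∈ {F | M.IsFlat F ∧ X ∩ M.E ⊆ F}} :=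
    ⟨⟨M.E, M.ground_isFlat, Set.inter_subset_right⟩⟩
  exact Matroid.IsFlat.iInter fun F => F.2.1

lemma closure_subset_flat' {α : Type*} {M : Matroid α} {F X : Set α} (hF : M.IsFlat F)
    (h : X ⊆ F) : M.closure X ⊆ F := by
  rw [← hF.closure]; exact M.closure_subset_closure h

theorem stmt14 {n : ℕ} (M : Matroid (Fin n)) (hE : M.E = Set.univ)
    (hL : ∀ i : Fin n, M.Indep {i}) (N : Set (TildeL M)) (hN : N ⊆ tBuilding M) :
    TNested M N ↔
      ∃ (I : Set (Fin n)) (_ : M.Indep I) (𝓕 : Set (Set (Fin n))),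
        (∀ F ∈ 𝓕, M.IsFlat F) ∧ IsChain (· ⊆ ·) 𝓕 ∧ (∀ F ∈ 𝓕, I ⊆ F) ∧
        N = {x : TildeL M |
          (∃ i ∈ I, ∃ h : M.Indep {i}, x = Sum.inl ⟨{i}, h⟩) ∨
          (∃ F ∈ 𝓕, ∃ h : M.IsFlat F, x = Sum.inr ⟨F, h⟩)} := by
  have hsub : ∀ X : Set (Fin n), X ⊆ M.E := fun X => hE ▸ Set.subset_univ X
  constructor
  · rintro ⟨-, hnest⟩
    set I : Set (Fin n) := {i | Sum.inl ⟨{i}, hL i⟩ ∈ N} with hI_def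
    set 𝓕 : Set (Set (Fin n)) := {F | ∃ h : M.IsFlat F, Sum.inr ⟨F, h⟩ ∈ N} with h𝓕_def
    -- nestedness applied to pairs
    have pair : ∀ x ∈ N, ∀ y ∈ N, x ≠ y → ¬ tle x y → ¬ tle y x →
        ∀ g ∈ tBuilding M, ¬ IsTLUB {x, y} g := by
      intro x hx y hy hxy h1 h2 g hg
      refine hnest {x, y} ?_ (Set.toFinite _) ?_ ?_ g hg
      · rintro z (rfl | rfl) <;> assumption
      · rw [Set.ncard_pair hxy]
      · rintro a (rfl | rfl) b (rfl | rfl) hab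
        · exact absurd rfl hab
        · exact ⟨h1, h2⟩
        · exact ⟨h2, h1⟩
        · exact absurd rfl hab
    -- 𝓕 is a chain
    have hchain : IsChain (· ⊆ ·) 𝓕 := by
      rintro F ⟨hF, hFN⟩ G ⟨hG, hGN⟩ hFG
      by_contra hcon
      push_neg at hcon
      obtain ⟨h1, h2⟩ := hcon
      refine pair _ hFN _ hGN
        (fun h => hFG (Subtype.ext_iff.mp (Sum.inr_injective h)))
        h1 h2 (Sum.inr ⟨M.closure (F ∪ G), flat_closure' M _⟩)
        (Or.inr ⟨_, _, rfl⟩) ⟨?_, ?_⟩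
      · rintro z (rfl | rfl)
        · exact Set.subset_union_left.trans (M.subset_closure _ (hsub _))
        · exact Set.subset_union_right.trans (M.subset_closure _ (hsub _))
      · rintro (J | ⟨H, hH⟩) hz
        · exact hz (Sum.inr ⟨F, hF⟩) (Set.mem_insert _ _)
        · exact closure_subset_flat' hH
            (Set.union_subset (hz _ (Set.mem_insert _ _)) (hz _ (Set.mem_insert_of_mem _ rfl)))
    -- I is contained in every flat of 𝓕
    have hIF : ∀ F ∈ 𝓕, I ⊆ F := by
      rintro F ⟨hF, hFN⟩ i hi
      by_contra hiF
      refine pair _ hi _ hFN (fun h => nomatch h)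
        (fun h => hiF (Set.singleton_subset_iff.mp h)) (fun h => h)
        (Sum.inr ⟨M.closure (insert i F), flat_closure' M _⟩)
        (Or.inr ⟨_, _, rfl⟩) ⟨?_, ?_⟩
      · rintro z (rfl | rfl)
        · exact Set.singleton_subset_iff.mpr (M.subset_closure _ (hsub _) (Set.mem_insert _ _))
        · exact (Set.subset_insert _ _).trans (M.subset_closure _ (hsub _))
      · rintro (J | ⟨H, hH⟩) hz
        · exact hz (Sum.inr ⟨F, hF⟩) (Set.mem_insert_of_mem _ rfl)
        · refine closure_subset_flat' hH (Set.insert_subset ?_ (hz _ (Set.mem_insert_of_mem _ rfl)))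
          exact Set.singleton_subset_iff.mp (hz _ (Set.mem_insert _ _))
    -- I is independent
    have hIndep : M.Indep I := by
      by_contra hdep
      have hss : 2 ≤ I.ncard := by
        by_contra h
        push_neg at h
        have hsing : I.Subsingleton := by
          intro a ha b hb
          by_contra hab
          have : 1 < I.ncard := (Set.one_lt_ncard (Set.toFinite I)).mpr ⟨a, ha, b, hb, hab⟩
          omega
        rcases hsing.eq_empty_or_singleton with h' | ⟨a, h'⟩
        · exact hdep (by rw [h']; exact M.empty_indep)
        · exact hdep (by rw [h']; exact hL a)
      set f : Fin n → TildeL M := fun i => Sum.inl ⟨{i}, hL i⟩ with hf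
      have hfinj : Function.Injective f := by
        intro a b h
        have := Subtype.ext_iff.mp (Sum.inl_injective h)
        simpa using this
      refine hnest (f '' I) ?_ (Set.Finite.image _ (Set.toFinite I)) ?_ ?_
        (Sum.inr ⟨M.closure I, flat_closure' M I⟩) (Or.inr ⟨_, _, rfl⟩) ⟨?_, ?_⟩
      · rintro _ ⟨i, hi, rfl⟩; exact hi
      · rw [Set.ncard_image_of_injective I hfinj]; exact hss
      · rintro _ ⟨a, ha, rfl⟩ _ ⟨b, hb, rfl⟩ hne
        have hab : a ≠ b := fun h => hne (by rw [h])
        constructor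
        · intro h
          have h' : ({a} : Set (Fin n)) ⊆ {b} := h
          exact hab (by simpa using h')
        · intro h
          have h' : ({b} : Set (Fin n)) ⊆ {a} := h
          have hba : b = a := by simpa using h'
          exact hab hba.symm
      · rintro _ ⟨a, ha, rfl⟩
        exact Set.singleton_subset_iff.mpr (M.subset_closure I (hsub I) ha)
      · rintro (J | ⟨H, hH⟩) hz
        · refine absurd (J.2.subset (fun a ha => ?_)) hdep
          exact Set.singleton_subset_iff.mp (hz _ ⟨a, ha, rfl⟩)
        · refine closure_subset_flat' hH (fun a ha => ?_)
          exact Set.singleton_subset_iff.mp (hz _ ⟨a, ha, rfl⟩)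
    refine ⟨I, hIndep, 𝓕, fun F hF => hF.choose, hchain, hIF, ?_⟩
    ext x
    constructor
    · intro hx
      rcases hN hx with ⟨i, h, rfl⟩ | ⟨F, h, rfl⟩
      · exact Or.inl ⟨i, hx, h, rfl⟩
      · exact Or.inr ⟨F, ⟨h, hx⟩, h, rfl⟩
    · rintro (⟨i, hi, h, rfl⟩ | ⟨F, hF, h, rfl⟩)
      · exact hi
      · exact hF.choose_spec
  · rintro ⟨I, hI, 𝓕, hFlat, hchain, hIF, rfl⟩
    refine ⟨hN, ?_⟩
    intro s hsN hsfin hs2 hanti g hg hlub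
    -- s contains no flats
    have hnoflat : ∀ F (hF : M.IsFlat F), Sum.inr ⟨F, hF⟩ ∉ s := by
      intro F hF hFs
      have hFmem : F ∈ 𝓕 := by
        rcases hsN hFs with ⟨i, hi, h, heq⟩ | ⟨G, hG, h, heq⟩
        · exact absurd heq (fun h' => nomatch h')
        · have hFG : F = G := Subtype.ext_iff.mp (Sum.inr_injective heq)
          rw [hFG]; exact hG
      obtain ⟨y, hys, hyne⟩ := Set.exists_ne_of_one_lt_ncard (s := s) (by omega) (Sum.inr ⟨F, hF⟩)
      rcases hsN hys with ⟨i, hi, h, rfl⟩ | ⟨G, hG, h, rfl⟩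
      · exact (hanti _ hys _ hFs hyne).1 (Set.singleton_subset_iff.mpr (hIF F hFmem hi))
      · have hGF : G ≠ F := fun h' => hyne (by subst h'; rfl)
        rcases hchain hG hFmem hGF with h' | h'
        · exact (hanti _ hys _ hFs hyne).1 h'
        · exact (hanti _ hys _ hFs hyne).2 h'
    -- so every element of s is a singleton from I
    have hform : ∀ x ∈ s, ∃ i ∈ I, ∃ h : M.Indep {i}, x = Sum.inl ⟨{i}, h⟩ := by
      intro x hx
      rcases hsN hx with h | ⟨F, hF, h, rfl⟩
      · exact h
      · exact absurd hx (hnoflat F h)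
    rcases hg with ⟨k, hk, rfl⟩ | ⟨F, hF, rfl⟩
    · obtain ⟨a, has, b, hbs, hab⟩ := (Set.one_lt_ncard hsfin).mp (by omega)
      obtain ⟨i, hi, hih, rfl⟩ := hform a has
      obtain ⟨j, hj, hjh, rfl⟩ := hform b hbs
      have h1 : ({i} : Set (Fin n)) ⊆ {k} := hlub.1 _ has
      have h2 : ({j} : Set (Fin n)) ⊆ {k} := hlub.1 _ hbs
      apply hab
      obtain rfl : i = k := by simpa using h1
      obtain rfl : j = i := by simpa using h2
      rfl
    · have : tle (Sum.inr ⟨F, hF⟩) (Sum.inl ⟨I, hI⟩) := by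
        apply hlub.2
        intro x hx
        obtain ⟨i, hi, h, rfl⟩ := hform x hx
        exact Set.singleton_subset_iff.mpr hi
      exact this
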